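/- Let p > 1 and let G be a finite simple connected graph with exactly n ≥ 4 edges whose boundary B(G) (the set of vertices of degree one) is nonempty. If G is a path graph (i.e., G is isomorphic to P_{n+1}), then λ_{1,p}(G) > λ_{1,p}(T_{n,3}). -/

import Mathlib

open scoped Classical

noncomputable section

/-- The term `|f x - f y| ^ p` as a function on unordered pairs. -/
noncomputable def edgeTerm {V : Type*} (p : ℝ) (f : V → ℝ) : Sym2 V → ℝ :=
  Sym2.lift ⟨fun x y => |f x - f y| ^ p, fun x y => by dsimp only; rw [abs_sub_comm]⟩

/-- The `p`-Rayleigh quotient of a function on a finite graph. -/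
noncomputable def rayleigh {V : Type*} [Fintype V] [DecidableEq V] (G : SimpleGraph V)
    (p : ℝ) (f : V → ℝ) : ℝ :=
  (∑ e ∈ G.edgeFinset, edgeTerm p f e) / ∑ v, |f v| ^ p

/-- The first `p`-Dirichlet eigenvalue: infimum of the Rayleigh quotient over nonzero
functions vanishing on the boundary (vertices of degree one). -/
noncomputable def lambda1 {V : Type*} [Fintype V] [DecidableEq V] (G : SimpleGraph V)
    (p : ℝ) : ℝ :=
  sInf {r | ∃ f : V → ℝ, f ≠ 0 ∧ (∀ v, G.degree v = 1 → f v = 0) ∧ r = rayleigh G p f}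

/-- The tadpole graph `T_{n,i}` on vertices `0,…,n-1` (vertex `t_k` is `k-1`):
edges `t_k t_{k+1}` for `1 ≤ k ≤ n-1` together with the edge `t_1 t_i`. -/
def tadpole (n i : ℕ) : SimpleGraph (Fin n) :=
  SimpleGraph.fromRel (fun a b => a.val + 1 = b.val ∨ (a.val = 0 ∧ b.val = i - 1))

/-- The path graph on `n` vertices `0,…,n-1`. -/
def pathG (n : ℕ) : SimpleGraph (Fin n) :=
  SimpleGraph.fromRel (fun a b : Fin n => a.val + 1 = b.val)

/-- The set of edges of `G` with exactly one endpoint in `U`. -/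
noncomputable def crossEdges {V : Type*} [Fintype V] [DecidableEq V] (G : SimpleGraph V)
    (U : Finset V) : Finset (Sym2 V) :=
  G.edgeFinset.filter fun e =>
    Sym2.lift ⟨fun x y => (x ∈ U ∧ y ∉ U) ∨ (x ∉ U ∧ y ∈ U),
      fun x y => by simp only [eq_iff_iff]; tauto⟩ e

/-- The Dirichlet Cheeger constant: infimum of `|E(U,Uᶜ)|/|U|` over nonempty sets `U`
of interior vertices (vertices of degree at least two). -/
noncomputable def dCheeger {V : Type*} [Fintype V] [DecidableEq V] (G : SimpleGraph V) : ℝ :=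
  sInf {r | ∃ U : Finset V, U.Nonempty ∧ (∀ v ∈ U, 2 ≤ G.degree v) ∧
    r = ((crossEdges G U).card : ℝ) / U.card}

namespace PCGT

open Finset

lemma edgeTerm_nonneg {V : Type*} (p : ℝ) (f : V → ℝ) (e : Sym2 V) : 0 ≤ edgeTerm p f e := by
  induction e using Sym2.ind with
  | _ a b => exact Real.rpow_nonneg (abs_nonneg _) p

lemma energy_nonneg {V : Type*} [Fintype V] [DecidableEq V] (G : SimpleGraph V) (p : ℝ)
    (f : V → ℝ) : 0 ≤ ∑ e ∈ G.edgeFinset, edgeTerm p f e :=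
  Finset.sum_nonneg fun e _ => edgeTerm_nonneg p f e

lemma mass_nonneg {V : Type*} [Fintype V] (p : ℝ) (f : V → ℝ) :
    0 ≤ ∑ v, |f v| ^ p :=
  Finset.sum_nonneg fun v _ => Real.rpow_nonneg (abs_nonneg _) p

lemma rayleigh_nonneg {V : Type*} [Fintype V] [DecidableEq V] (G : SimpleGraph V) (p : ℝ)
    (f : V → ℝ) : 0 ≤ rayleigh G p f :=
  div_nonneg (energy_nonneg G p f) (mass_nonneg p f)

def RSet {V : Type*} [Fintype V] [DecidableEq V] (G : SimpleGraph V) (p : ℝ) : Set ℝ :=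
  {r | ∃ f : V → ℝ, f ≠ 0 ∧ (∀ v, G.degree v = 1 → f v = 0) ∧ r = rayleigh G p f}

lemma lambda1_eq {V : Type*} [Fintype V] [DecidableEq V] (G : SimpleGraph V) (p : ℝ) :
    lambda1 G p = sInf (RSet G p) := rfl

lemma RSet_bddBelow {V : Type*} [Fintype V] [DecidableEq V] (G : SimpleGraph V) (p : ℝ) :
    BddBelow (RSet G p) := by
  refine ⟨0, fun r hr => ?_⟩
  obtain ⟨f, -, -, rfl⟩ := hr
  exact rayleigh_nonneg G p f

section Iso
variable {V W : Type*} [Fintype V] [DecidableEq V] [Fintype W] [DecidableEq W]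
variable {G : SimpleGraph V} {G' : SimpleGraph W}

lemma iso_degree (e : G ≃g G') (v : V) : G'.degree (e v) = G.degree v := by
  have h : G'.neighborFinset (e v) = (G.neighborFinset v).map e.toEquiv.toEmbedding := by
    ext w
    rw [Finset.mem_map_equiv, SimpleGraph.mem_neighborFinset, SimpleGraph.mem_neighborFinset]
    constructor
    · intro h
      rw [← e.toEquiv.apply_symm_apply w] at h
      exact e.map_adj_iff.mp h
    · intro h
      rw [← e.toEquiv.apply_symm_apply w]
      exact e.map_adj_iff.mpr h
  rw [SimpleGraph.degree, SimpleGraph.degree, h, Finset.card_map]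

lemma iso_edge_sum (e : G ≃g G') (p : ℝ) (f : W → ℝ) :
    ∑ ed ∈ G'.edgeFinset, edgeTerm p f ed
      = ∑ ed ∈ G.edgeFinset, edgeTerm p (fun v => f (e v)) ed := by
  have himg : G'.edgeFinset = G.edgeFinset.image (Sym2.map e) := by
    ext ed
    induction ed using Sym2.ind with
    | _ a b =>
      simp only [SimpleGraph.mem_edgeFinset, Finset.mem_image, SimpleGraph.mem_edgeSet]
      constructor
      · intro h
        refine ⟨s(e.symm a, e.symm b), ?_, ?_⟩
        · rw [SimpleGraph.mem_edgeSet]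
          exact e.symm.map_adj_iff.mpr h
        · simp [Sym2.map_pair_eq]
      · rintro ⟨ed', hmem, hmap⟩
        induction ed' using Sym2.ind with
        | _ x y =>
          rw [SimpleGraph.mem_edgeSet] at hmem
          rw [Sym2.map_pair_eq, Sym2.eq_iff] at hmap
          have hadj : G'.Adj (e x) (e y) := e.map_adj_iff.mpr hmem
          rcases hmap with ⟨rfl, rfl⟩ | ⟨rfl, rfl⟩
          · exact hadj
          · exact hadj.symm
  rw [himg, Finset.sum_image]
  · apply Finset.sum_congr rfl
    intro ed _
    induction ed using Sym2.ind with
    | _ x y => simp [Sym2.map_pair_eq, edgeTerm]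
  · intro x _ y _ hxy
    exact Sym2.map.injective e.toEquiv.injective hxy

lemma iso_rayleigh (e : G ≃g G') (p : ℝ) (f : W → ℝ) :
    rayleigh G' p f = rayleigh G p (fun v => f (e v)) := by
  unfold rayleigh
  rw [iso_edge_sum e p f]
  congr 1
  exact (Equiv.sum_comp e.toEquiv (fun w => |f w| ^ p)).symm

lemma RSet_subset (e : G ≃g G') (p : ℝ) : RSet G' p ⊆ RSet G p := by
  rintro r ⟨f, hne, hvan, rfl⟩
  refine ⟨fun v => f (e v), ?_, ?_, (iso_rayleigh e p f)⟩
  · intro h0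
    apply hne
    funext w
    have := congrFun h0 (e.symm w)
    simpa using this
  · intro v hv
    apply hvan
    rw [iso_degree e v]
    exact hv

lemma lambda1_iso (e : G ≃g G') (p : ℝ) : lambda1 G p = lambda1 G' p := by
  rw [lambda1_eq, lambda1_eq]
  have h : RSet G p = RSet G' p :=
    Set.Subset.antisymm (RSet_subset e.symm p) (RSet_subset e p)
  rw [h]

end Iso


/-! ### Sequence energies -/

noncomputable def EE (p : ℝ) (n : ℕ) (a : ℕ → ℝ) : ℝ :=
  ∑ k ∈ Finset.range n, |a (k + 1) - a k| ^ p

noncomputable def DD (p : ℝ) (n : ℕ) (a : ℕ → ℝ) : ℝ :=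
  ∑ k ∈ Finset.range (n + 1), |a k| ^ p

lemma EE_nonneg (p : ℝ) (n : ℕ) (a : ℕ → ℝ) : 0 ≤ EE p n a :=
  Finset.sum_nonneg fun k _ => Real.rpow_nonneg (abs_nonneg _) p

lemma DD_nonneg (p : ℝ) (n : ℕ) (a : ℕ → ℝ) : 0 ≤ DD p n a :=
  Finset.sum_nonneg fun k _ => Real.rpow_nonneg (abs_nonneg _) p

lemma sum_diff_two {F G : ℕ → ℝ} {N i j : ℕ} (hij : i ≠ j) (hi : i < N) (hj : j < N)
    (hoff : ∀ k, k < N → k ≠ i → k ≠ j → F k = G k) :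
    ∑ k ∈ Finset.range N, F k = ∑ k ∈ Finset.range N, G k + (F i + F j - (G i + G j)) := by
  have hsub : ({i, j} : Finset ℕ) ⊆ Finset.range N := by
    intro x hx
    simp only [Finset.mem_insert, Finset.mem_singleton] at hx
    rcases hx with rfl | rfl <;> simpa [Finset.mem_range]
  have hkey : ∑ k ∈ Finset.range N, (F k - G k) = F i - G i + (F j - G j) := by
    rw [← Finset.sum_subset hsub]
    · rw [Finset.sum_pair hij]
    · intro x hxN hxS
      simp only [Finset.mem_insert, Finset.mem_singleton, not_or] at hxS
      rw [hoff x (Finset.mem_range.mp hxN) hxS.1 hxS.2, sub_self]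
  rw [Finset.sum_sub_distrib] at hkey
  linarith

lemma sum_diff_one {F G : ℕ → ℝ} {N i : ℕ} (hi : i < N)
    (hoff : ∀ k, k < N → k ≠ i → F k = G k) :
    ∑ k ∈ Finset.range N, F k = ∑ k ∈ Finset.range N, G k + (F i - G i) := by
  have hsub : ({i} : Finset ℕ) ⊆ Finset.range N := by
    intro x hx
    simp only [Finset.mem_singleton] at hx
    subst hx; simpa [Finset.mem_range]
  have hkey : ∑ k ∈ Finset.range N, (F k - G k) = F i - G i := by
    rw [← Finset.sum_subset hsub]
    · rw [Finset.sum_singleton]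
    · intro x hxN hxS
      simp only [Finset.mem_singleton] at hxS
      rw [hoff x (Finset.mem_range.mp hxN) hxS, sub_self]
  rw [Finset.sum_sub_distrib] at hkey
  linarith

lemma EE_rev (p : ℝ) (m : ℕ) (a : ℕ → ℝ) : EE p m (fun k => a (m - k)) = EE p m a := by
  rw [EE, EE, ← Finset.sum_range_reflect (fun k => |a (k + 1) - a k| ^ p) m]
  apply Finset.sum_congr rfl
  intro k hk
  rw [Finset.mem_range] at hk
  have e1 : m - 1 - k + 1 = m - k := by omega
  have e2 : m - 1 - k = m - (k + 1) := by omega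
  rw [e1, e2, abs_sub_comm]

lemma DD_rev (p : ℝ) (m : ℕ) (a : ℕ → ℝ) : DD p m (fun k => a (m - k)) = DD p m a := by
  rw [DD, DD, ← Finset.sum_range_reflect (fun k => |a k| ^ p) (m + 1)]
  apply Finset.sum_congr rfl
  intro k hk
  rw [Finset.mem_range] at hk
  have e1 : m + 1 - 1 - k = m - k := by omega
  rw [e1]

/-! ### Path graph combinatorics -/

lemma path_chain_eq (m : ℕ) :
    (pathG (m + 1)).edgeFinset =
      Finset.image (fun k : Fin m => s((k.castSucc : Fin (m + 1)), k.succ)) Finset.univ := by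
  ext ed
  induction ed using Sym2.ind with
  | _ a b =>
    rw [SimpleGraph.mem_edgeFinset]
    simp only [SimpleGraph.mem_edgeFinset, SimpleGraph.mem_edgeSet, pathG,
      SimpleGraph.fromRel_adj, Finset.mem_image, Finset.mem_univ, true_and]
    constructor
    · rintro ⟨hne, h | h⟩
      · refine ⟨⟨a.val, by have := b.isLt; omega⟩, ?_⟩
        rw [Sym2.eq_iff]
        left
        constructor
        · apply Fin.ext; simp
        · apply Fin.ext; simp [h]
      · refine ⟨⟨b.val, by have := a.isLt; omega⟩, ?_⟩
        rw [Sym2.eq_iff]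
        right
        constructor
        · apply Fin.ext; simp
        · apply Fin.ext; simp [h]
    · rintro ⟨k, hk⟩
      rw [Sym2.eq_iff] at hk
      rcases hk with ⟨h1, h2⟩ | ⟨h1, h2⟩
      · constructor
        · rw [← h1, ← h2]
          intro heq
          have := congrArg Fin.val heq
          simp at this
        · left; rw [← h1, ← h2]; simp
      · constructor
        · rw [← h1, ← h2]
          intro heq
          have := congrArg Fin.val heq
          simp at this
        · right; rw [← h1, ← h2]; simp
      
lemma path_chain_inj (m : ℕ) : ∀ x ∈ (Finset.univ : Finset (Fin m)), ∀ y ∈ Finset.univ,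
    (fun k : Fin m => s((k.castSucc : Fin (m + 1)), k.succ)) x
      = (fun k : Fin m => s((k.castSucc : Fin (m + 1)), k.succ)) y → x = y := by
  intro x _ y _ h
  simp only [Sym2.eq_iff] at h
  rcases h with ⟨h1, -⟩ | ⟨h1, h2⟩
  · exact Fin.castSucc_injective m h1
  · have e1 := congrArg Fin.val h1
    have e2 := congrArg Fin.val h2
    simp at e1 e2
    apply Fin.ext
    omega

lemma path_energy (m : ℕ) (p : ℝ) (b : ℕ → ℝ) :
    ∑ ed ∈ (pathG (m + 1)).edgeFinset, edgeTerm p (fun v : Fin (m + 1) => b v.val) ed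
      = EE p m b := by
  rw [path_chain_eq, Finset.sum_image (path_chain_inj m)]
  have h : ∀ k : Fin m,
      edgeTerm p (fun v : Fin (m + 1) => b v.val) s((k.castSucc : Fin (m + 1)), k.succ)
        = |b (k.val + 1) - b k.val| ^ p := by
    intro k
    show |b (k.castSucc : Fin (m+1)).val - b (k.succ : Fin (m+1)).val| ^ p = _
    rw [Fin.coe_castSucc, Fin.val_succ, abs_sub_comm]
  rw [Finset.sum_congr rfl fun k _ => h k]
  exact Fin.sum_univ_eq_sum_range (fun k => |b (k + 1) - b k| ^ p) m

lemma path_mass (m : ℕ) (p : ℝ) (b : ℕ → ℝ) :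
    ∑ v : Fin (m + 1), |(fun v : Fin (m + 1) => b v.val) v| ^ p = DD p m b :=
  Fin.sum_univ_eq_sum_range (fun k => |b k| ^ p) (m + 1)

lemma path_rayleigh (m : ℕ) (p : ℝ) (b : ℕ → ℝ) :
    rayleigh (pathG (m + 1)) p (fun v : Fin (m + 1) => b v.val) = EE p m b / DD p m b := by
  unfold rayleigh
  rw [path_energy, path_mass]

/-! ### Path degrees -/

lemma path_degree_zero (m : ℕ) (hm : 1 ≤ m) : (pathG (m + 1)).degree (0 : Fin (m + 1)) = 1 := by
  have h : (pathG (m + 1)).neighborFinset 0 = {(⟨1, by omega⟩ : Fin (m + 1))} := by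
    ext w
    rw [SimpleGraph.mem_neighborFinset]
    simp only [SimpleGraph.mem_neighborFinset, pathG, SimpleGraph.fromRel_adj,
      Finset.mem_singleton]
    constructor
    · rintro ⟨hne, h | h⟩
      · apply Fin.ext
        simp only [Fin.val_zero] at h
        simp [← h]
      · exfalso
        simp only [Fin.val_zero] at h
        omega
    · rintro rfl
      refine ⟨?_, Or.inl ?_⟩
      · intro heq
        have := congrArg Fin.val heq
        simp at this
      · simp
  rw [SimpleGraph.degree, h, Finset.card_singleton]

lemma path_degree_last (m : ℕ) (hm : 1 ≤ m) : (pathG (m + 1)).degree (Fin.last m) = 1 := by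
  have h : (pathG (m + 1)).neighborFinset (Fin.last m) = {(⟨m - 1, by omega⟩ : Fin (m + 1))} := by
    ext w
    rw [SimpleGraph.mem_neighborFinset]
    simp only [SimpleGraph.mem_neighborFinset, pathG, SimpleGraph.fromRel_adj,
      Finset.mem_singleton]
    constructor
    · rintro ⟨hne, h | h⟩
      · exfalso
        simp only [Fin.val_last] at h
        have := w.isLt
        omega
      · apply Fin.ext
        simp only [Fin.val_last] at h
        simp
        omega
    · rintro rfl
      refine ⟨?_, Or.inr ?_⟩
      · intro heq
        have := congrArg Fin.val heq
        simp at this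
        omega
      · simp
        omega
  rw [SimpleGraph.degree, h, Finset.card_singleton]

lemma path_degree_two (m : ℕ) (v : Fin (m + 1)) (h0 : v.val ≠ 0) (hm : v.val ≠ m) :
    2 ≤ (pathG (m + 1)).degree v := by
  have hv := v.isLt
  have hsub : ({⟨v.val - 1, by omega⟩, ⟨v.val + 1, by omega⟩} : Finset (Fin (m + 1)))
      ⊆ (pathG (m + 1)).neighborFinset v := by
    intro w hw
    simp only [Finset.mem_insert, Finset.mem_singleton] at hw
    rw [SimpleGraph.mem_neighborFinset]
    rcases hw with rfl | rfl
    · refine ⟨?_, Or.inr ?_⟩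
      · intro heq
        have := congrArg Fin.val heq
        simp at this
        omega
      · simp
        omega
    · refine ⟨?_, Or.inl ?_⟩
      · intro heq
        have := congrArg Fin.val heq
        simp at this
      · simp
  have hcard : ({⟨v.val - 1, by omega⟩, ⟨v.val + 1, by omega⟩} : Finset (Fin (m + 1))).card = 2 := by
    rw [Finset.card_pair]
    intro heq
    have h2 : v.val - 1 = v.val + 1 := congrArg Fin.val heq
    omega
  calc 2 = _ := hcard.symm
    _ ≤ _ := Finset.card_le_card hsub

lemma path_degree_char (m : ℕ) (v : Fin (m + 1)) (h : (pathG (m + 1)).degree v = 1) :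
    v.val = 0 ∨ v.val = m := by
  by_contra hcon
  push_neg at hcon
  have := path_degree_two m v hcon.1 hcon.2
  omega

/-! ### Tadpole degrees and edges -/

lemma tad_degree_two (n : ℕ) (hn : 4 ≤ n) (v : Fin n) (hv : v.val ≠ n - 1) :
    2 ≤ (tadpole n 3).degree v := by
  have hvlt := v.isLt
  rcases Nat.eq_zero_or_pos v.val with h0 | h0
  · -- neighbors 1 and 2
    have hsub : ({⟨1, by omega⟩, ⟨2, by omega⟩} : Finset (Fin n))
        ⊆ (tadpole n 3).neighborFinset v := by
      intro w hw
      simp only [Finset.mem_insert, Finset.mem_singleton] at hw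
      rw [SimpleGraph.mem_neighborFinset]
      rcases hw with rfl | rfl
      · refine ⟨?_, Or.inl (Or.inl ?_)⟩
        · intro heq
          have := congrArg Fin.val heq
          simp [h0] at this
        · simp [h0]
      · refine ⟨?_, Or.inl (Or.inr ?_)⟩
        · intro heq
          have := congrArg Fin.val heq
          simp [h0] at this
        · simp [h0]
    have hcard : ({⟨1, by omega⟩, ⟨2, by omega⟩} : Finset (Fin n)).card = 2 := by
      rw [Finset.card_pair]
      intro heq
      have := congrArg Fin.val heq
      simp at this
    calc 2 = _ := hcard.symm
      _ ≤ _ := Finset.card_le_card hsub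
  · have hsub : ({⟨v.val - 1, by omega⟩, ⟨v.val + 1, by omega⟩} : Finset (Fin n))
        ⊆ (tadpole n 3).neighborFinset v := by
      intro w hw
      simp only [Finset.mem_insert, Finset.mem_singleton] at hw
      rw [SimpleGraph.mem_neighborFinset]
      rcases hw with rfl | rfl
      · refine ⟨?_, Or.inr (Or.inl ?_)⟩
        · intro heq
          have := congrArg Fin.val heq
          simp at this
          omega
        · simp
          omega
      · refine ⟨?_, Or.inl (Or.inl ?_)⟩
        · intro heq
          have := congrArg Fin.val heq
          simp at this
        · simp
    have hcard : ({⟨v.val - 1, by omega⟩, ⟨v.val + 1, by omega⟩} : Finset (Fin n)).card = 2 := by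
      rw [Finset.card_pair]
      intro heq
      have h2 : v.val - 1 = v.val + 1 := congrArg Fin.val heq
      omega
    calc 2 = _ := hcard.symm
      _ ≤ _ := Finset.card_le_card hsub

lemma tad_edge_subset (n : ℕ) (hn : 4 ≤ n) :
    (tadpole n 3).edgeFinset ⊆
      insert s((⟨0, by omega⟩ : Fin n), (⟨2, by omega⟩ : Fin n))
        (Finset.image (fun k : Fin (n - 1) =>
          s((⟨k.val, by have := k.isLt; omega⟩ : Fin n), (⟨k.val + 1, by have := k.isLt; omega⟩ : Fin n)))
          Finset.univ) := by
  intro ed hed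
  revert hed
  induction ed using Sym2.ind with
  | _ a b =>
    intro hed
    rw [SimpleGraph.mem_edgeFinset, SimpleGraph.mem_edgeSet] at hed
    obtain ⟨hne, hrel⟩ := hed
    rw [Finset.mem_insert]
    have hbuild : ∀ (x y : Fin n), x.val + 1 = y.val → s(x, y) = s(a, b) →
        s(a, b) ∈ Finset.image (fun k : Fin (n - 1) =>
          s((⟨k.val, by have := k.isLt; omega⟩ : Fin n), (⟨k.val + 1, by have := k.isLt; omega⟩ : Fin n)))
          Finset.univ := by
      intro x y hxy heq
      rw [Finset.mem_image]
      refine ⟨⟨x.val, by have := y.isLt; omega⟩, Finset.mem_univ _, ?_⟩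
      rw [← heq, Sym2.eq_iff]
      left
      exact ⟨Fin.ext rfl, Fin.ext hxy⟩
    rcases hrel with (h | ⟨h1, h2⟩) | (h | ⟨h1, h2⟩)
    · exact Or.inr (hbuild a b h rfl)
    · left
      have e1 : a = ⟨0, by omega⟩ := Fin.ext (by simpa using h1)
      have e2 : b = ⟨2, by omega⟩ := Fin.ext (by simpa using h2)
      rw [e1, e2]
    · exact Or.inr (hbuild b a h (Sym2.eq_swap))
    · left
      have e1 : b = ⟨0, by omega⟩ := Fin.ext (by simpa using h1)
      have e2 : a = ⟨2, by omega⟩ := Fin.ext (by simpa using h2)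
      rw [e1, e2, Sym2.eq_swap]

lemma tad_chain_inj (n : ℕ) : ∀ x ∈ (Finset.univ : Finset (Fin (n - 1))), ∀ y ∈ Finset.univ,
    (fun k : Fin (n - 1) =>
      s((⟨k.val, by have := k.isLt; omega⟩ : Fin n), (⟨k.val + 1, by have := k.isLt; omega⟩ : Fin n))) x
    = (fun k : Fin (n - 1) =>
      s((⟨k.val, by have := k.isLt; omega⟩ : Fin n), (⟨k.val + 1, by have := k.isLt; omega⟩ : Fin n))) y
    → x = y := by
  intro x _ y _ h
  simp only [Sym2.eq_iff] at h
  rcases h with ⟨h1, -⟩ | ⟨h1, h2⟩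
  · have := congrArg Fin.val h1
    simp at this
    exact Fin.ext this
  · have e1 := congrArg Fin.val h1
    have e2 := congrArg Fin.val h2
    simp at e1 e2
    apply Fin.ext
    omega

lemma tad_e02_not_mem (n : ℕ) (hn : 4 ≤ n) :
    s((⟨0, by omega⟩ : Fin n), (⟨2, by omega⟩ : Fin n)) ∉
      Finset.image (fun k : Fin (n - 1) =>
        s((⟨k.val, by have := k.isLt; omega⟩ : Fin n), (⟨k.val + 1, by have := k.isLt; omega⟩ : Fin n)))
        Finset.univ := by
  rw [Finset.mem_image]
  rintro ⟨k, -, hk⟩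
  rw [Sym2.eq_iff] at hk
  rcases hk with ⟨h1, h2⟩ | ⟨h1, h2⟩
  · have e1 : k.val = 0 := congrArg Fin.val h1
    have e2 : k.val + 1 = 2 := congrArg Fin.val h2
    omega
  · have e1 : k.val + 1 = 0 := congrArg Fin.val h2
    omega

/-! ### Existence of a minimizer on the path -/

lemma exists_min (m : ℕ) (hm : 4 ≤ m) (p : ℝ) (hp : 1 < p) :
    ∃ a : ℕ → ℝ, a 0 = 0 ∧ a m = 0 ∧ (∀ k, 0 ≤ a k) ∧ DD p m a = 1 ∧
      EE p m a = lambda1 (pathG (m + 1)) p ∧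
      (∀ b : ℕ → ℝ, b 0 = 0 → b m = 0 → (∃ k, k ≤ m ∧ b k ≠ 0) →
        lambda1 (pathG (m + 1)) p * DD p m b ≤ EE p m b) := by
  have hp0 : (0 : ℝ) < p := by linarith
  set P := pathG (m + 1) with hP
  set Efun : (Fin (m + 1) → ℝ) → ℝ := fun f => ∑ ed ∈ P.edgeFinset, edgeTerm p f ed with hEfun
  set Dfun : (Fin (m + 1) → ℝ) → ℝ := fun f => ∑ v, |f v| ^ p with hDfun
  have hDcont : Continuous Dfun := by
    apply continuous_finset_sum
    intro v _
    exact ((continuous_apply v).abs).rpow_const fun x => Or.inr hp0.le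
  have hEcont : Continuous Efun := by
    apply continuous_finset_sum
    intro ed _
    induction ed using Sym2.ind with
    | _ a b =>
      have : (fun f : Fin (m + 1) → ℝ => edgeTerm p f s(a, b))
          = fun f : Fin (m + 1) → ℝ => |f a - f b| ^ p := rfl
      rw [this]
      exact (((continuous_apply a).sub (continuous_apply b)).abs).rpow_const fun x => Or.inr hp0.le
  set K : Set (Fin (m + 1) → ℝ) :=
    {f | (∀ v, P.degree v = 1 → f v = 0) ∧ Dfun f = 1} with hK
  -- K is closed
  have hKclosed : IsClosed K := by
    have : K = (⋂ v, {f : Fin (m + 1) → ℝ | P.degree v = 1 → f v = 0}) ∩ Dfun ⁻¹' {1} := by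
      ext f
      simp [hK, Set.mem_iInter]
    rw [this]
    apply IsClosed.inter
    · apply isClosed_iInter
      intro v
      by_cases h : P.degree v = 1
      · simp only [h, forall_true_left]
        exact isClosed_eq (continuous_apply v) continuous_const
      · simp only [h]
        simp
    · exact IsClosed.preimage hDcont isClosed_singleton
  -- K is bounded
  have hKbounded : Bornology.IsBounded K := by
    apply Metric.isBounded_closedBall (x := (0 : Fin (m + 1) → ℝ)) (r := 1) |>.subset
    intro f hf
    rw [Metric.mem_closedBall]
    rw [dist_pi_le_iff zero_le_one]
    intro v
    have hD1 : Dfun f = 1 := hf.2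
    have hterm : |f v| ^ p ≤ 1 := by
      rw [← hD1]
      apply Finset.single_le_sum (f := fun v => |f v| ^ p)
        (fun w _ => Real.rpow_nonneg (abs_nonneg _) p) (Finset.mem_univ v)
    have habs : |f v| ≤ 1 := by
      by_contra hcon
      push_neg at hcon
      have := Real.rpow_lt_rpow zero_le_one hcon hp0
      rw [Real.one_rpow] at this
      linarith
    simpa [Real.dist_eq] using habs
  have hKcompact : IsCompact K := Metric.isCompact_of_isClosed_isBounded hKclosed hKbounded
  -- K is nonempty
  have hone : ((⟨1, by omega⟩ : Fin (m + 1)) : Fin (m + 1)).val = 1 := rfl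
  set f₁ : Fin (m + 1) → ℝ := fun v => if v = ⟨1, by omega⟩ then 1 else 0 with hf₁
  have hf₁K : f₁ ∈ K := by
    constructor
    · intro v hv
      rcases path_degree_char m v hv with h | h
      · simp only [hf₁]
        rw [if_neg]
        intro heq
        have := congrArg Fin.val heq
        rw [h] at this
        simp at this
      · simp only [hf₁]
        rw [if_neg]
        intro heq
        have := congrArg Fin.val heq
        rw [h] at this
        simp only [hone] at this
        omega
    · show (∑ v, |f₁ v| ^ p) = 1
      rw [Finset.sum_eq_single (⟨1, by omega⟩ : Fin (m + 1))]
      · simp only [hf₁, if_pos rfl]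
        rw [abs_one, Real.one_rpow]
      · intro w _ hw
        simp only [hf₁, if_neg hw]
        rw [abs_zero, Real.zero_rpow hp0.ne']
      · intro h
        exact absurd (Finset.mem_univ _) h
  -- minimizer
  obtain ⟨f0, hf0K, hf0min⟩ := hKcompact.exists_isMinOn ⟨f₁, hf₁K⟩ hEcont.continuousOn
  have hf0min' : ∀ g ∈ K, Efun f0 ≤ Efun g := fun g hg => hf0min hg
  have hf0D : Dfun f0 = 1 := hf0K.2
  have hf0van : ∀ v, P.degree v = 1 → f0 v = 0 := hf0K.1
  have hf0ne : f0 ≠ 0 := by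
    intro h
    rw [h] at hf0D
    simp only [hDfun] at hf0D
    simp [Real.zero_rpow hp0.ne'] at hf0D
  -- lambda1 = Efun f0
  have hray0 : rayleigh P p f0 = Efun f0 := by
    unfold rayleigh
    rw [show (∑ v, |f0 v| ^ p) = Dfun f0 from rfl, hf0D, div_one]
  have hmem0 : Efun f0 ∈ RSet P p := ⟨f0, hf0ne, hf0van, hray0.symm⟩
  have hlower : ∀ r ∈ RSet P p, Efun f0 ≤ r := by
    rintro r ⟨f, hfne, hfvan, rfl⟩
    have hDpos : 0 < Dfun f := by
      rcases (mass_nonneg p f).lt_or_eq with h | h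
      · exact h
      · exfalso
        apply hfne
        funext v
        have := (Finset.sum_eq_zero_iff_of_nonneg
          (fun w _ => Real.rpow_nonneg (abs_nonneg (f w)) p)).mp h.symm v (Finset.mem_univ v)
        have habs : |f v| = 0 := (Real.rpow_eq_zero (abs_nonneg _) hp0.ne').mp this
        exact abs_eq_zero.mp habs
    set c : ℝ := (Dfun f) ^ (-p⁻¹) with hc
    have hcpos : 0 < c := Real.rpow_pos_of_pos hDpos _
    have hcp : c ^ p = (Dfun f)⁻¹ := by
      rw [hc, ← Real.rpow_mul hDpos.le]
      rw [show -p⁻¹ * p = -1 by field_simp]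
      exact Real.rpow_neg_one _
    set g : Fin (m + 1) → ℝ := fun v => c * f v with hg
    have hgK : g ∈ K := by
      constructor
      · intro v hv
        simp only [hg]
        rw [hfvan v hv, mul_zero]
      · show (∑ v, |g v| ^ p) = 1
        have hterm : ∀ v : Fin (m + 1), |g v| ^ p = c ^ p * |f v| ^ p := by
          intro v
          simp only [hg]
          rw [abs_mul, Real.mul_rpow (abs_nonneg _) (abs_nonneg _), abs_of_pos hcpos]
        rw [Finset.sum_congr rfl fun v _ => hterm v, ← Finset.mul_sum]
        rw [show (∑ v, |f v| ^ p) = Dfun f from rfl, hcp, inv_mul_cancel₀ hDpos.ne']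
    have hEg : Efun g = c ^ p * Efun f := by
      show (∑ ed ∈ P.edgeFinset, edgeTerm p g ed) = c ^ p * ∑ ed ∈ P.edgeFinset, edgeTerm p f ed
      rw [Finset.mul_sum]
      apply Finset.sum_congr rfl
      intro ed _
      induction ed using Sym2.ind with
      | _ x y =>
        show |g x - g y| ^ p = c ^ p * |f x - f y| ^ p
        simp only [hg]
        rw [← mul_sub, abs_mul, Real.mul_rpow (abs_nonneg _) (abs_nonneg _), abs_of_pos hcpos]
    have hkey := hf0min' g hgK
    rw [hEg, hcp] at hkey
    calc Efun f0 ≤ (Dfun f)⁻¹ * Efun f := hkey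
      _ = Efun f / Dfun f := by rw [div_eq_inv_mul]
      _ = rayleigh P p f := rfl
  have hlam : lambda1 P p = Efun f0 := by
    rw [lambda1_eq]
    exact le_antisymm (csInf_le (RSet_bddBelow P p) hmem0) (le_csInf ⟨_, hmem0⟩ hlower)
  -- the nonnegative minimizing sequence
  set a : ℕ → ℝ := fun k => if h : k < m + 1 then |f0 ⟨k, h⟩| else 0 with ha
  have haval : ∀ v : Fin (m + 1), a v.val = |f0 v| := by
    intro v
    simp only [ha]
    rw [dif_pos v.isLt]
  have ha0 : a 0 = 0 := by
    have h0 := haval (0 : Fin (m + 1))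
    simp only [Fin.val_zero] at h0
    rw [h0, hf0van 0 (path_degree_zero m (by omega)), abs_zero]
  have ham : a m = 0 := by
    have h0 := haval (Fin.last m)
    simp only [Fin.val_last] at h0
    rw [h0, hf0van (Fin.last m) (path_degree_last m (by omega)), abs_zero]
  have hnn : ∀ k, 0 ≤ a k := by
    intro k
    simp only [ha]
    split
    · exact abs_nonneg _
    · exact le_refl 0
  have hDa : DD p m a = 1 := by
    rw [← path_mass m p a]
    have hterm : ∀ v : Fin (m + 1), |a v.val| ^ p = |f0 v| ^ p := by
      intro v
      rw [haval v, abs_abs]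
    rw [Finset.sum_congr rfl fun v _ => hterm v]
    exact hf0D
  have hfabsK : (fun v => |f0 v|) ∈ K := by
    constructor
    · intro v hv
      show |f0 v| = 0
      rw [hf0van v hv, abs_zero]
    · show (∑ v, |(|f0 v|)| ^ p) = 1
      have hterm : ∀ v : Fin (m + 1), |(|f0 v|)| ^ p = |f0 v| ^ p := fun v => by rw [abs_abs]
      rw [Finset.sum_congr rfl fun v _ => hterm v]
      exact hf0D
  have hEabs : Efun (fun v => |f0 v|) = Efun f0 := by
    apply le_antisymm
    · apply Finset.sum_le_sum
      intro ed _
      induction ed using Sym2.ind with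
      | _ x y =>
        show |(|f0 x| - |f0 y|)| ^ p ≤ |f0 x - f0 y| ^ p
        exact Real.rpow_le_rpow (abs_nonneg _) (abs_abs_sub_abs_le_abs_sub _ _) hp0.le
    · exact hf0min' _ hfabsK
  have hEa : EE p m a = lambda1 P p := by
    rw [← path_energy m p a]
    have haF : (fun v : Fin (m + 1) => a v.val) = fun v => |f0 v| := funext fun v => haval v
    rw [haF, hlam]
    exact hEabs
  refine ⟨a, ha0, ham, hnn, hDa, hEa, ?_⟩
  rintro b hb0 hbm ⟨k, hk, hbk⟩
  set bF : Fin (m + 1) → ℝ := fun v => b v.val with hbF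
  have hbFne : bF ≠ 0 := by
    intro h
    have := congrFun h ⟨k, by omega⟩
    simp only [hbF] at this
    exact hbk this
  have hbFvan : ∀ v, P.degree v = 1 → bF v = 0 := by
    intro v hv
    rcases path_degree_char m v hv with h | h
    · show b v.val = 0
      rw [h]; exact hb0
    · show b v.val = 0
      rw [h]; exact hbm
  have hmemb : rayleigh P p bF ∈ RSet P p := ⟨bF, hbFne, hbFvan, rfl⟩
  have hle : lambda1 P p ≤ rayleigh P p bF := csInf_le (RSet_bddBelow P p) hmemb
  have hDbpos : 0 < DD p m b := by
    have h1 : |b k| ^ p ≤ DD p m b :=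
      Finset.single_le_sum (f := fun i => |b i| ^ p)
        (fun i _ => Real.rpow_nonneg (abs_nonneg _) p) (Finset.mem_range.mpr (by omega))
    have h2 : 0 < |b k| ^ p := Real.rpow_pos_of_pos (abs_pos.mpr hbk) p
    linarith
  have hray : rayleigh P p bF = EE p m b / DD p m b := path_rayleigh m p b
  rw [hray] at hle
  exact (le_div_iff₀ hDbpos).mp hle

/-! ### Structure of the minimizer -/

lemma lam_pos (m : ℕ) (p : ℝ) (hp : 1 < p) (lam : ℝ) (a : ℕ → ℝ)
    (ha0 : a 0 = 0) (hD : DD p m a = 1) (hE : EE p m a = lam) : 0 < lam := by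
  have hp0 : (0 : ℝ) < p := by linarith
  rcases (EE_nonneg p m a).lt_or_eq with h | h
  · rw [hE] at h; exact h
  · exfalso
    have hzero : ∀ k, k < m → a (k + 1) = a k := by
      intro k hk
      have hterm := (Finset.sum_eq_zero_iff_of_nonneg
        (fun i (_ : i ∈ Finset.range m) => Real.rpow_nonneg (abs_nonneg (a (i+1) - a i)) p)).mp
        h.symm k (Finset.mem_range.mpr hk)
      have habs : |a (k + 1) - a k| = 0 :=
        (Real.rpow_eq_zero (abs_nonneg _) hp0.ne').mp hterm
      have := abs_eq_zero.mp habs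
      linarith
    have hall : ∀ k, k ≤ m → a k = 0 := by
      intro k
      induction k with
      | zero => intro _; exact ha0
      | succ k ih => intro hk; rw [hzero k (by omega), ih (by omega)]
    have hDz : DD p m a = 0 := by
      apply Finset.sum_eq_zero
      intro k hk
      rw [Finset.mem_range] at hk
      rw [hall k (by omega), abs_zero, Real.zero_rpow hp0.ne']
    rw [hD] at hDz
    exact one_ne_zero hDz

lemma lam_lt_one (m : ℕ) (hm : 4 ≤ m) (p : ℝ) (hp : 1 < p) (lam : ℝ)
    (hmin : ∀ b : ℕ → ℝ, b 0 = 0 → b m = 0 → (∃ k, k ≤ m ∧ b k ≠ 0) →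
      lam * DD p m b ≤ EE p m b) : lam < 1 := by
  have hp0 : (0 : ℝ) < p := by linarith
  set u : ℕ → ℝ := fun k => if k = 0 ∨ m ≤ k then 0 else if k = 1 ∨ k = m - 1 then 1 else 2
    with hu
  have hu0 : u 0 = 0 := by simp only [hu]; simp
  have hum : u m = 0 := by simp only [hu]; simp
  have hv1 : u 1 = 1 := by
    simp only [hu]; rw [if_neg (by omega)]; simp
  have hvm1 : u (m - 1) = 1 := by
    simp only [hu]; rw [if_neg (by omega)]
    simp
  have hvmid : ∀ i, 2 ≤ i → i ≤ m - 2 → u i = 2 := by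
    intro i hi1 hi2
    simp only [hu]; rw [if_neg (by omega), if_neg (by omega)]
  have hune : ∃ k, k ≤ m ∧ u k ≠ 0 := by
    refine ⟨1, by omega, ?_⟩
    rw [hv1]; norm_num
  have hite : ∀ (c : Prop) (_ : Decidable c), (0 : ℝ) ≤ if c then (1 : ℝ) else 0 := by
    intro c hc; split <;> norm_num
  have hEu : EE p m u ≤ 4 := by
    have hpt : ∀ k, k < m → |u (k + 1) - u k| ^ p ≤
        (if k = 0 then (1 : ℝ) else 0) + (if k = 1 then (1 : ℝ) else 0)
        + (if k = m - 2 then (1 : ℝ) else 0) + (if k = m - 1 then (1 : ℝ) else 0) := by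
      intro k hk
      by_cases h0 : k = 0
      · subst h0
        have e : |u (0 + 1) - u 0| ^ p = 1 := by
          rw [show (0:ℕ)+1 = 1 from rfl, hv1, hu0, sub_zero, abs_one, Real.one_rpow]
        rw [e]
        have i2 := hite ((0:ℕ) = 1) inferInstance
        have i3 := hite ((0:ℕ) = m - 2) inferInstance
        have i4 := hite ((0:ℕ) = m - 1) inferInstance
        rw [if_pos rfl]
        linarith
      by_cases h1 : k = 1
      · subst h1
        have e : |u (1 + 1) - u 1| ^ p = 1 := by
          rw [hvmid 2 le_rfl (by omega), hv1]
          norm_num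
        rw [e, if_pos rfl]
        have i1 := hite ((1:ℕ) = 0) inferInstance
        have i3 := hite ((1:ℕ) = m - 2) inferInstance
        have i4 := hite ((1:ℕ) = m - 1) inferInstance
        linarith
      by_cases hm1 : k = m - 1
      · subst hm1
        have e : |u (m - 1 + 1) - u (m - 1)| ^ p = 1 := by
          rw [show m - 1 + 1 = m by omega, hum, hvm1]
          norm_num
        rw [e, if_pos rfl]
        have i1 := hite (m - 1 = 0) inferInstance
        have i2 := hite (m - 1 = 1) inferInstance
        have i3 := hite (m - 1 = m - 2) inferInstance
        linarith
      by_cases hm2 : k = m - 2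
      · subst hm2
        have e : |u (m - 2 + 1) - u (m - 2)| ^ p = 1 := by
          rw [show m - 2 + 1 = m - 1 by omega, hvm1, hvmid (m - 2) (by omega) le_rfl]
          norm_num
        rw [e, if_pos rfl]
        have i1 := hite (m - 2 = 0) inferInstance
        have i2 := hite (m - 2 = 1) inferInstance
        have i4 := hite (m - 2 = m - 1) inferInstance
        linarith
      · have e : |u (k + 1) - u k| ^ p = 0 := by
          rw [hvmid k (by omega) (by omega), hvmid (k + 1) (by omega) (by omega)]
          rw [sub_self, abs_zero, Real.zero_rpow hp0.ne']
        rw [e]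
        have i1 := hite (k = 0) inferInstance
        have i2 := hite (k = 1) inferInstance
        have i3 := hite (k = m - 2) inferInstance
        have i4 := hite (k = m - 1) inferInstance
        linarith
    have hind : ∀ j : ℕ, (∑ k ∈ Finset.range m, (if k = j then (1 : ℝ) else 0)) ≤ 1 := by
      intro j
      rw [Finset.sum_ite_eq' (Finset.range m) j (fun _ => (1 : ℝ))]
      split <;> norm_num
    calc EE p m u ≤ ∑ k ∈ Finset.range m,
          ((if k = 0 then (1 : ℝ) else 0) + (if k = 1 then (1 : ℝ) else 0)
          + (if k = m - 2 then (1 : ℝ) else 0) + (if k = m - 1 then (1 : ℝ) else 0)) := by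
            apply Finset.sum_le_sum
            intro k hk
            exact hpt k (Finset.mem_range.mp hk)
      _ ≤ 4 := by
            rw [Finset.sum_add_distrib, Finset.sum_add_distrib, Finset.sum_add_distrib]
            have := hind 0
            have := hind 1
            have := hind (m - 2)
            have := hind (m - 1)
            linarith
  have hDu : 2 + ((m : ℝ) - 3) * 2 ^ p ≤ DD p m u := by
    have hsub : insert 1 (insert (m - 1) (Finset.Icc 2 (m - 2))) ⊆ Finset.range (m + 1) := by
      intro x hx
      simp only [Finset.mem_insert, Finset.mem_Icc] at hx
      rw [Finset.mem_range]
      omega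
    have hle := Finset.sum_le_sum_of_subset_of_nonneg hsub
      (fun k _ _ => Real.rpow_nonneg (abs_nonneg (u k)) p)
    have h1 : (1 : ℕ) ∉ insert (m - 1) (Finset.Icc 2 (m - 2)) := by
      simp only [Finset.mem_insert, Finset.mem_Icc]
      omega
    have h2 : m - 1 ∉ Finset.Icc 2 (m - 2) := by
      simp only [Finset.mem_Icc]
      omega
    rw [Finset.sum_insert h1, Finset.sum_insert h2] at hle
    have e1 : |u 1| ^ p = 1 := by rw [hv1, abs_one, Real.one_rpow]
    have e2 : |u (m - 1)| ^ p = 1 := by rw [hvm1, abs_one, Real.one_rpow]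
    have emid : ∑ k ∈ Finset.Icc 2 (m - 2), |u k| ^ p = ((m : ℝ) - 3) * 2 ^ p := by
      have hterm : ∀ k ∈ Finset.Icc 2 (m - 2), |u k| ^ p = 2 ^ p := by
        intro k hk
        rw [Finset.mem_Icc] at hk
        rw [hvmid k hk.1 hk.2]
        norm_num
      rw [Finset.sum_congr rfl hterm, Finset.sum_const, Nat.card_Icc]
      rw [nsmul_eq_mul]
      congr 1
      have : m - 2 + 1 - 2 = m - 3 := by omega
      rw [this]
      push_cast [Nat.cast_sub (by omega : 3 ≤ m)]
      ring
    rw [e1, e2, emid] at hle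
    calc 2 + ((m : ℝ) - 3) * 2 ^ p = 1 + (1 + ((m : ℝ) - 3) * 2 ^ p) := by ring
      _ ≤ DD p m u := hle
  have h2p : (2 : ℝ) < 2 ^ p := by
    have h := Real.rpow_lt_rpow_of_exponent_lt (x := 2) one_lt_two hp
    rwa [Real.rpow_one] at h
  have hm3 : (1 : ℝ) ≤ (m : ℝ) - 3 := by
    have : (4 : ℝ) ≤ (m : ℝ) := by exact_mod_cast hm
    linarith
  have hDu4 : 4 < DD p m u := by
    have hp2 : (0 : ℝ) ≤ 2 ^ p := Real.rpow_nonneg (by norm_num) p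
    nlinarith
  have hkey := hmin u hu0 hum hune
  by_contra hcon
  push_neg at hcon
  have h4 : DD p m u ≤ lam * DD p m u := le_mul_of_one_le_left (by linarith) hcon
  linarith



lemma no_zero (m : ℕ) (p : ℝ) (hp : 1 < p) (lam : ℝ) (hlam0 : 0 < lam)
    (a : ℕ → ℝ) (ha0 : a 0 = 0) (ham : a m = 0) (hnn : ∀ k, 0 ≤ a k)
    (hD : DD p m a = 1) (hE : EE p m a = lam)
    (hmin : ∀ b : ℕ → ℝ, b 0 = 0 → b m = 0 → (∃ k, k ≤ m ∧ b k ≠ 0) →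
      lam * DD p m b ≤ EE p m b)
    {j : ℕ} (hj : j + 2 ≤ m) (hz : a (j + 1) = 0) (hne : ¬(a j = 0 ∧ a (j + 2) = 0)) :
    False := by
  have hp0 : (0 : ℝ) < p := by linarith
  set c := max (a j) (a (j + 2)) with hc
  have hc0 : 0 < c := by
    rcases not_and_or.mp hne with h | h
    · exact lt_max_of_lt_left (lt_of_le_of_ne (hnn j) (Ne.symm h))
    · exact lt_max_of_lt_right (lt_of_le_of_ne (hnn (j + 2)) (Ne.symm h))
  set b := fun k => if k = j + 1 then c else a k with hb
  have hb0 : b 0 = 0 := by simp only [hb]; rw [if_neg (by omega)]; exact ha0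
  have hbm : b m = 0 := by simp only [hb]; rw [if_neg (by omega)]; exact ham
  have hbne : ∃ k, k ≤ m ∧ b k ≠ 0 :=
    ⟨j + 1, by omega, by simp only [hb]; rw [if_pos trivial]; exact hc0.ne'⟩
  have hDb : DD p m b = 1 + c ^ p := by
    have h1 : ∑ k ∈ Finset.range (m + 1), |b k| ^ p
        = ∑ k ∈ Finset.range (m + 1), |a k| ^ p + (|b (j + 1)| ^ p - |a (j + 1)| ^ p) :=
      sum_diff_one (by omega) (fun k _ hk1 => by simp only [hb]; rw [if_neg hk1])
    have e1 : |b (j + 1)| ^ p = c ^ p := by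
      simp only [hb]; rw [if_pos trivial, abs_of_pos hc0]
    have e2 : |a (j + 1)| ^ p = 0 := by rw [hz, abs_zero, Real.zero_rpow hp0.ne']
    have eD : ∑ k ∈ Finset.range (m + 1), |a k| ^ p = 1 := hD
    calc DD p m b = ∑ k ∈ Finset.range (m + 1), |b k| ^ p := rfl
      _ = ∑ k ∈ Finset.range (m + 1), |a k| ^ p + (|b (j + 1)| ^ p - |a (j + 1)| ^ p) := h1
      _ = 1 + c ^ p := by rw [e1, e2, eD]; ring
  have hEb : EE p m b ≤ lam := by
    have hoff : ∀ k, k < m → k ≠ j → k ≠ j + 1 →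
        |b (k + 1) - b k| ^ p = |a (k + 1) - a k| ^ p := by
      intro k _ hkj hkj1
      simp only [hb]
      rw [if_neg (by omega), if_neg (by omega)]
    have h1 : ∑ k ∈ Finset.range m, |b (k + 1) - b k| ^ p
        = ∑ k ∈ Finset.range m, |a (k + 1) - a k| ^ p
          + (|b (j + 1) - b j| ^ p + |b (j + 1 + 1) - b (j + 1)| ^ p
            - (|a (j + 1) - a j| ^ p + |a (j + 1 + 1) - a (j + 1)| ^ p)) :=
      sum_diff_two (by omega) (by omega) (by omega) hoff
    have eb1 : |b (j + 1) - b j| ^ p = |c - a j| ^ p := by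
      simp only [hb]; rw [if_pos trivial, if_neg (by omega)]
    have eb2 : |b (j + 1 + 1) - b (j + 1)| ^ p = |a (j + 2) - c| ^ p := by
      simp only [hb]
      norm_num
    have ea1 : |a (j + 1) - a j| ^ p = |a j| ^ p := by rw [hz, zero_sub, abs_neg]
    have ea2 : |a (j + 1 + 1) - a (j + 1)| ^ p = |a (j + 2)| ^ p := by
      rw [hz, sub_zero]
    have hbound : |c - a j| ^ p + |a (j + 2) - c| ^ p ≤ |a j| ^ p + |a (j + 2)| ^ p := by
      rcases le_total (a j) (a (j + 2)) with h | h
      · have hcm : c = a (j + 2) := max_eq_right h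
        have t1 : |a (j + 2) - c| ^ p = 0 := by
          rw [hcm, sub_self, abs_zero, Real.zero_rpow hp0.ne']
        have t2 : |c - a j| ^ p ≤ |a (j + 2)| ^ p := by
          rw [hcm, abs_of_nonneg (by linarith), abs_of_nonneg (hnn _)]
          exact Real.rpow_le_rpow (by linarith) (by linarith [hnn j]) hp0.le
        have t3 : (0 : ℝ) ≤ |a j| ^ p := Real.rpow_nonneg (abs_nonneg _) p
        linarith
      · have hcm : c = a j := max_eq_left h
        have t1 : |c - a j| ^ p = 0 := by
          rw [hcm, sub_self, abs_zero, Real.zero_rpow hp0.ne']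
        have t2 : |a (j + 2) - c| ^ p ≤ |a j| ^ p := by
          rw [hcm, abs_of_nonpos (by linarith), neg_sub, abs_of_nonneg (hnn _)]
          exact Real.rpow_le_rpow (by linarith) (by linarith [hnn (j + 2)]) hp0.le
        have t3 : (0 : ℝ) ≤ |a (j + 2)| ^ p := Real.rpow_nonneg (abs_nonneg _) p
        linarith
    have eE : ∑ k ∈ Finset.range m, |a (k + 1) - a k| ^ p = lam := hE
    calc EE p m b = ∑ k ∈ Finset.range m, |b (k + 1) - b k| ^ p := rfl
      _ = ∑ k ∈ Finset.range m, |a (k + 1) - a k| ^ p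
          + (|b (j + 1) - b j| ^ p + |b (j + 1 + 1) - b (j + 1)| ^ p
            - (|a (j + 1) - a j| ^ p + |a (j + 1 + 1) - a (j + 1)| ^ p)) := h1
      _ ≤ lam := by rw [eb1, eb2, ea1, ea2, eE]; linarith
  have hkey := hmin b hb0 hbm hbne
  rw [hDb] at hkey
  have hcp : 0 < c ^ p := Real.rpow_pos_of_pos hc0 p
  have hexp : lam * (1 + c ^ p) = lam + lam * c ^ p := by ring
  rw [hexp] at hkey
  have := mul_pos hlam0 hcp
  linarith


lemma pos_one (m : ℕ) (hm : 4 ≤ m) (p : ℝ) (hp : 1 < p) (lam : ℝ) (hlam0 : 0 < lam)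
    (a : ℕ → ℝ) (ha0 : a 0 = 0) (ham : a m = 0) (hnn : ∀ k, 0 ≤ a k)
    (hD : DD p m a = 1) (hE : EE p m a = lam)
    (hmin : ∀ b : ℕ → ℝ, b 0 = 0 → b m = 0 → (∃ k, k ≤ m ∧ b k ≠ 0) →
      lam * DD p m b ≤ EE p m b) : 0 < a 1 := by
  have hp0 : (0 : ℝ) < p := by linarith
  rcases (hnn 1).lt_or_eq with h | h
  · exact h
  exfalso
  have h1 : a 1 = 0 := h.symm
  have hall : ∀ k, k ≤ m → a k = 0 := by
    intro k
    induction k using Nat.strong_induction_on with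
    | _ k ih =>
      intro hk
      match k with
      | 0 => exact ha0
      | 1 => exact h1
      | (j + 2) =>
        by_contra hcon
        exact no_zero m p hp lam hlam0 a ha0 ham hnn hD hE hmin (j := j) (by omega)
          (ih (j + 1) (by omega) (by omega)) (fun hand => hcon hand.2)
  have hDz : DD p m a = 0 := by
    apply Finset.sum_eq_zero
    intro k hk
    rw [Finset.mem_range] at hk
    rw [hall k (by omega), abs_zero, Real.zero_rpow hp0.ne']
  rw [hD] at hDz
  exact one_ne_zero hDz

lemma pos_two (m : ℕ) (hm : 4 ≤ m) (p : ℝ) (hp : 1 < p) (lam : ℝ) (hlam0 : 0 < lam)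
    (a : ℕ → ℝ) (ha0 : a 0 = 0) (ham : a m = 0) (hnn : ∀ k, 0 ≤ a k)
    (hD : DD p m a = 1) (hE : EE p m a = lam)
    (hmin : ∀ b : ℕ → ℝ, b 0 = 0 → b m = 0 → (∃ k, k ≤ m ∧ b k ≠ 0) →
      lam * DD p m b ≤ EE p m b) : 0 < a 2 := by
  rcases (hnn 2).lt_or_eq with h | h
  · exact h
  exfalso
  have h1pos := pos_one m hm p hp lam hlam0 a ha0 ham hnn hD hE hmin
  exact no_zero m p hp lam hlam0 a ha0 ham hnn hD hE hmin (j := 1) (by omega) h.symm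
    (fun hand => h1pos.ne' hand.1)

lemma step12 (m : ℕ) (hm : 4 ≤ m) (p : ℝ) (hp : 1 < p) (lam : ℝ) (hlam0 : 0 < lam)
    (hlam1 : lam < 1)
    (a : ℕ → ℝ) (ha0 : a 0 = 0) (ham : a m = 0) (hnn : ∀ k, 0 ≤ a k)
    (hD : DD p m a = 1) (hE : EE p m a = lam)
    (hmin : ∀ b : ℕ → ℝ, b 0 = 0 → b m = 0 → (∃ k, k ≤ m ∧ b k ≠ 0) →
      lam * DD p m b ≤ EE p m b) : a 1 ≤ a 2 := by
  by_contra hcon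
  push_neg at hcon
  have hp0 : (0 : ℝ) < p := by linarith
  have h2pos : 0 < a 2 := pos_two m hm p hp lam hlam0 a ha0 ham hnn hD hE hmin
  set b := fun k => if k = 1 then a 2 else a k with hb
  have hb0 : b 0 = 0 := by simp only [hb]; rw [if_neg (by omega)]; exact ha0
  have hbm : b m = 0 := by simp only [hb]; rw [if_neg (by omega)]; exact ham
  have hbne : ∃ k, k ≤ m ∧ b k ≠ 0 :=
    ⟨2, by omega, by simp only [hb]; rw [if_neg (by omega)]; exact h2pos.ne'⟩
  set A1 := |a 1| ^ p with hA1
  set A2 := |a 2| ^ p with hA2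
  set G1 := |a 2 - a 1| ^ p with hG1
  have hDb : DD p m b = 1 + (A2 - A1) := by
    have h1 : ∑ k ∈ Finset.range (m + 1), |b k| ^ p
        = ∑ k ∈ Finset.range (m + 1), |a k| ^ p + (|b 1| ^ p - |a 1| ^ p) :=
      sum_diff_one (by omega) (fun k _ hk1 => by simp only [hb]; rw [if_neg hk1])
    have e1 : |b 1| ^ p = A2 := by simp only [hb]; simp [hA2]
    have eD : ∑ k ∈ Finset.range (m + 1), |a k| ^ p = 1 := hD
    calc DD p m b = ∑ k ∈ Finset.range (m + 1), |b k| ^ p := rfl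
      _ = ∑ k ∈ Finset.range (m + 1), |a k| ^ p + (|b 1| ^ p - |a 1| ^ p) := h1
      _ = 1 + (A2 - A1) := by rw [e1, eD, hA1]
  have hEb : EE p m b = lam + (A2 - A1 - G1) := by
    have hoff : ∀ k, k < m → k ≠ 0 → k ≠ 1 →
        |b (k + 1) - b k| ^ p = |a (k + 1) - a k| ^ p := by
      intro k _ hk0 hk1
      simp only [hb]
      rw [if_neg (by omega), if_neg (by omega)]
    have h1 : ∑ k ∈ Finset.range m, |b (k + 1) - b k| ^ p
        = ∑ k ∈ Finset.range m, |a (k + 1) - a k| ^ p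
          + (|b (0 + 1) - b 0| ^ p + |b (1 + 1) - b 1| ^ p
            - (|a (0 + 1) - a 0| ^ p + |a (1 + 1) - a 1| ^ p)) :=
      sum_diff_two (by omega) (by omega) (by omega) hoff
    have eb1 : |b (0 + 1) - b 0| ^ p = A2 := by
      simp only [hb]
      norm_num [ha0, hA2]
    have eb2 : |b (1 + 1) - b 1| ^ p = 0 := by
      simp only [hb]
      norm_num [Real.zero_rpow hp0.ne']
    have ea1 : |a (0 + 1) - a 0| ^ p = A1 := by
      rw [show (0:ℕ)+1 = 1 from rfl, ha0, sub_zero, hA1]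
    have ea2 : |a (1 + 1) - a 1| ^ p = G1 := by
      rw [show (1:ℕ)+1 = 2 from rfl, hG1]
    have eE : ∑ k ∈ Finset.range m, |a (k + 1) - a k| ^ p = lam := hE
    calc EE p m b = ∑ k ∈ Finset.range m, |b (k + 1) - b k| ^ p := rfl
      _ = ∑ k ∈ Finset.range m, |a (k + 1) - a k| ^ p
          + (|b (0 + 1) - b 0| ^ p + |b (1 + 1) - b 1| ^ p
            - (|a (0 + 1) - a 0| ^ p + |a (1 + 1) - a 1| ^ p)) := h1
      _ = lam + (A2 - A1 - G1) := by rw [eb1, eb2, ea1, ea2, eE]; ring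
  have hA21 : A2 < A1 := by
    rw [hA1, hA2, abs_of_nonneg (hnn 1), abs_of_nonneg (hnn 2)]
    exact Real.rpow_lt_rpow (hnn 2) hcon hp0
  have hG1nn : 0 ≤ G1 := Real.rpow_nonneg (abs_nonneg _) p
  have hkey := hmin b hb0 hbm hbne
  rw [hDb, hEb] at hkey
  set X := A1 - A2 with hX
  have hXpos : 0 < X := by rw [hX]; linarith
  have e1 : lam * (1 + (A2 - A1)) = lam - lam * X := by rw [hX]; ring
  rw [e1] at hkey
  have e2 : (1 - lam) * X = X - lam * X := by ring
  have e3 : 0 < (1 - lam) * X := mul_pos (by linarith) hXpos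
  linarith

lemma dichotomy (m : ℕ) (hm : 4 ≤ m) (p : ℝ) (hp : 1 < p) (lam : ℝ) (hlam0 : 0 < lam)
    (a : ℕ → ℝ) (ha0 : a 0 = 0) (ham : a m = 0) (hnn : ∀ k, 0 ≤ a k)
    (hD : DD p m a = 1) (hE : EE p m a = lam)
    (hmin : ∀ b : ℕ → ℝ, b 0 = 0 → b m = 0 → (∃ k, k ≤ m ∧ b k ≠ 0) →
      lam * DD p m b ≤ EE p m b)
    (h1pos : 0 < a 1) (hm1pos : 0 < a (m - 1)) :
    a 1 ≤ a 3 ∨ a (m - 1) ≤ a (m - 3) := by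
  by_contra hcon
  push_neg at hcon
  obtain ⟨h3, hm3⟩ := hcon
  have hp0 : (0 : ℝ) < p := by linarith
  set c := min (a 1) (a (m - 1)) with hc
  have hc0 : 0 < c := lt_min h1pos hm1pos
  set b := fun k => if 1 ≤ k ∧ k ≤ m - 1 then max (a k) c else a k with hb
  have hb0 : b 0 = 0 := by simp only [hb]; rw [if_neg (by omega)]; exact ha0
  have hbm : b m = 0 := by simp only [hb]; rw [if_neg (by omega)]; exact ham
  have hb1 : b 1 = a 1 := by
    simp only [hb]; rw [if_pos (by omega)]
    exact max_eq_left (min_le_left _ _)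
  have hbm1 : b (m - 1) = a (m - 1) := by
    simp only [hb]; rw [if_pos (by omega)]
    exact max_eq_left (min_le_right _ _)
  have hbne : ∃ k, k ≤ m ∧ b k ≠ 0 := ⟨1, by omega, by rw [hb1]; exact h1pos.ne'⟩
  have hEb : EE p m b ≤ lam := by
    rw [← hE]
    apply Finset.sum_le_sum
    intro k hk
    rw [Finset.mem_range] at hk
    apply Real.rpow_le_rpow (abs_nonneg _) ?_ hp0.le
    by_cases hk0 : k = 0
    · subst hk0
      rw [show (0:ℕ)+1 = 1 from rfl, hb1, hb0, ha0]
    · by_cases hkm : k = m - 1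
      · subst hkm
        have e1 : b (m - 1 + 1) = a (m - 1 + 1) := by
          rw [show m - 1 + 1 = m by omega, hbm, ham]
        rw [e1, hbm1]
      · have e1 : b k = max (a k) c := by simp only [hb]; rw [if_pos (by omega)]
        have e2 : b (k + 1) = max (a (k + 1)) c := by simp only [hb]; rw [if_pos (by omega)]
        rw [e1, e2]
        exact abs_max_sub_max_le_abs _ _ _
  have hDb : 1 < DD p m b := by
    rw [← hD]
    apply Finset.sum_lt_sum
    · intro k _
      apply Real.rpow_le_rpow (abs_nonneg _) ?_ hp0.le
      have hbk : a k ≤ b k := by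
        simp only [hb]
        split
        · exact le_max_left _ _
        · exact le_refl _
      have hbnn : 0 ≤ b k := le_trans (hnn k) hbk
      rw [abs_of_nonneg (hnn k), abs_of_nonneg hbnn]
      exact hbk
    · rcases le_total (a 1) (a (m - 1)) with h | h
      · refine ⟨3, Finset.mem_range.mpr (by omega), ?_⟩
        have hc3 : c = a 1 := min_eq_left h
        have hb3 : b 3 = c := by
          simp only [hb]; rw [if_pos (by omega)]
          exact max_eq_right (by rw [hc3]; exact h3.le)
        rw [hb3, abs_of_nonneg (hnn 3), abs_of_pos hc0]
        exact Real.rpow_lt_rpow (hnn 3) (by rw [hc3]; exact h3) hp0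
      · refine ⟨m - 3, Finset.mem_range.mpr (by omega), ?_⟩
        have hc3 : c = a (m - 1) := min_eq_right h
        have hb3 : b (m - 3) = c := by
          simp only [hb]; rw [if_pos (by omega)]
          exact max_eq_right (by rw [hc3]; exact hm3.le)
        rw [hb3, abs_of_nonneg (hnn _), abs_of_pos hc0]
        exact Real.rpow_lt_rpow (hnn _) (by rw [hc3]; exact hm3) hp0
  have hkey := hmin b hb0 hbm hbne
  have h4 : lam * 1 < lam * DD p m b := mul_lt_mul_of_pos_left hDb hlam0
  rw [mul_one] at h4
  linarith

lemma improve (m : ℕ) (hm : 4 ≤ m) (p : ℝ) (hp : 1 < p) (lam : ℝ) (hlam0 : 0 < lam)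
    (hlam1 : lam < 1)
    (a : ℕ → ℝ) (ha0 : a 0 = 0) (ham : a m = 0) (hnn : ∀ k, 0 ≤ a k)
    (hD : DD p m a = 1) (hE : EE p m a = lam)
    (hmin : ∀ b : ℕ → ℝ, b 0 = 0 → b m = 0 → (∃ k, k ≤ m ∧ b k ≠ 0) →
      lam * DD p m b ≤ EE p m b) :
    ∃ h : ℕ → ℝ, h 0 = 0 ∧ h m = 0 ∧ (∀ k, 0 ≤ h k) ∧ DD p m h = 1 ∧ EE p m h = lam ∧
      0 < h 1 ∧ h 1 ≤ h 2 ∧ h 1 ≤ h 3 := by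
  have har0 : (fun k => a (m - k)) 0 = 0 := by
    show a (m - 0) = 0
    rw [Nat.sub_zero]; exact ham
  have harm : (fun k => a (m - k)) m = 0 := by
    show a (m - m) = 0
    rw [Nat.sub_self]; exact ha0
  have harnn : ∀ k, 0 ≤ (fun k => a (m - k)) k := fun k => hnn _
  have harD : DD p m (fun k => a (m - k)) = 1 := by rw [DD_rev]; exact hD
  have harE : EE p m (fun k => a (m - k)) = lam := by rw [EE_rev]; exact hE
  have h1pos : 0 < a 1 := pos_one m hm p hp lam hlam0 a ha0 ham hnn hD hE hmin
  have hm1pos : 0 < a (m - 1) :=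
    pos_one m hm p hp lam hlam0 (fun k => a (m - k)) har0 harm harnn harD harE hmin
  have h12 : a 1 ≤ a 2 := step12 m hm p hp lam hlam0 hlam1 a ha0 ham hnn hD hE hmin
  have hm12 : a (m - 1) ≤ a (m - 2) :=
    step12 m hm p hp lam hlam0 hlam1 (fun k => a (m - k)) har0 harm harnn harD harE hmin
  rcases dichotomy m hm p hp lam hlam0 a ha0 ham hnn hD hE hmin h1pos hm1pos with h | h
  · exact ⟨a, ha0, ham, hnn, hD, hE, h1pos, h12, h⟩
  · exact ⟨fun k => a (m - k), har0, harm, harnn, harD, harE, hm1pos, hm12, h⟩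


lemma tad_below (n : ℕ) (hn : 4 ≤ n) (p : ℝ) (hp : 1 < p) (lam : ℝ) (hlam0 : 0 < lam)
    (h : ℕ → ℝ) (hh0 : h 0 = 0) (hhn : h n = 0) (hnn : ∀ k, 0 ≤ h k)
    (hD : DD p n h = 1) (hE : EE p n h = lam)
    (h1 : 0 < h 1) (h12 : h 1 ≤ h 2) (h13 : h 1 ≤ h 3) :
    lambda1 (tadpole n 3) p < lam := by
  have hp0 : (0 : ℝ) < p := by linarith
  set t := max (h 2) (h 3) with ht
  have ht0 : 0 < t := lt_of_lt_of_le h1 (le_trans h12 (le_max_left _ _))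
  set g' : ℕ → ℝ := fun k => if k ≤ 1 then t else h (k + 1) with hg'
  have hg'0 : g' 0 = t := by simp only [hg']; rw [if_pos (by omega)]
  have hg'1 : g' 1 = t := by simp only [hg']; rw [if_pos (by omega)]
  have hg'big : ∀ k, 2 ≤ k → g' k = h (k + 1) := by
    intro k hk; simp only [hg']; rw [if_neg (by omega)]
  have hgne : (fun v : Fin n => g' v.val) ≠ 0 := by
    intro hzero
    have h0 := congrFun hzero ⟨0, by omega⟩
    simp only [Pi.zero_apply] at h0
    have : g' 0 = 0 := h0
    rw [hg'0] at this
    exact ht0.ne' this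
  have hvan : ∀ v, (tadpole n 3).degree v = 1 → (fun v : Fin n => g' v.val) v = 0 := by
    intro v hv
    have hvval : v.val = n - 1 := by
      by_contra hne
      have := tad_degree_two n hn v hne
      omega
    show g' v.val = 0
    rw [hvval, hg'big (n - 1) (by omega), show n - 1 + 1 = n by omega, hhn]
  have hmem : rayleigh (tadpole n 3) p (fun v : Fin n => g' v.val) ∈ RSet (tadpole n 3) p :=
    ⟨_, hgne, hvan, rfl⟩
  have hle : lambda1 (tadpole n 3) p ≤ rayleigh (tadpole n 3) p (fun v : Fin n => g' v.val) := by
    rw [lambda1_eq]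
    exact csInf_le (RSet_bddBelow _ _) hmem
  set S3 := ∑ k ∈ Finset.Ico 3 (n + 1), |h k| ^ p with hS3
  have hS3nn : 0 ≤ S3 := Finset.sum_nonneg fun k _ => Real.rpow_nonneg (abs_nonneg _) p
  have hDnum : (∑ v : Fin n, |(fun v : Fin n => g' v.val) v| ^ p) = 2 * t ^ p + S3 := by
    have e0 : (∑ v : Fin n, |g' v.val| ^ p) = ∑ k ∈ Finset.range n, |g' k| ^ p :=
      Fin.sum_univ_eq_sum_range (fun k => |g' k| ^ p) n
    have esplit : ∑ k ∈ Finset.Ico 0 2, |g' k| ^ p + ∑ k ∈ Finset.Ico 2 n, |g' k| ^ p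
        = ∑ k ∈ Finset.Ico 0 n, |g' k| ^ p :=
      Finset.sum_Ico_consecutive _ (by omega) (by omega)
    have e1 : ∑ k ∈ Finset.Ico 0 2, |g' k| ^ p = 2 * t ^ p := by
      rw [show Finset.Ico 0 2 = Finset.range 2 by rw [Finset.range_eq_Ico]]
      rw [Finset.sum_range_succ, Finset.sum_range_one, hg'0, hg'1, abs_of_pos ht0]
      ring
    have e2 : ∑ k ∈ Finset.Ico 2 n, |g' k| ^ p = S3 := by
      have hcong : ∀ k ∈ Finset.Ico 2 n, |g' k| ^ p = |h (k + 1)| ^ p := by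
        intro k hk
        rw [Finset.mem_Ico] at hk
        rw [hg'big k hk.1]
      rw [Finset.sum_congr rfl hcong, Finset.sum_Ico_eq_sum_range, hS3,
        Finset.sum_Ico_eq_sum_range]
      apply Finset.sum_congr
      · first
        | (congr 1; omega)
        | congr 1
      · intro i _
        have e : 2 + i + 1 = 3 + i := by omega
        rw [e]
    rw [e0, Finset.range_eq_Ico, ← esplit, e1, e2]
  have hDD1 : |h 1| ^ p + |h 2| ^ p + S3 = 1 := by
    have esplit : ∑ k ∈ Finset.Ico 0 3, |h k| ^ p + ∑ k ∈ Finset.Ico 3 (n + 1), |h k| ^ p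
        = ∑ k ∈ Finset.Ico 0 (n + 1), |h k| ^ p :=
      Finset.sum_Ico_consecutive _ (by omega) (by omega)
    have e3 : ∑ k ∈ Finset.Ico 0 3, |h k| ^ p = |h 1| ^ p + |h 2| ^ p := by
      rw [show Finset.Ico 0 3 = Finset.range 3 by rw [Finset.range_eq_Ico]]
      rw [Finset.sum_range_succ, Finset.sum_range_succ, Finset.sum_range_one]
      rw [hh0, abs_zero, Real.zero_rpow hp0.ne']
      ring
    have hDex : ∑ k ∈ Finset.Ico 0 (n + 1), |h k| ^ p = 1 := by
      rw [← Finset.range_eq_Ico]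
      exact hD
    rw [e3, hDex] at esplit
    linarith [esplit]
  set TailE := ∑ k ∈ Finset.Ico 3 n, |h (k + 1) - h k| ^ p with hTailE
  have hTailEnn : 0 ≤ TailE :=
    Finset.sum_nonneg fun k _ => Real.rpow_nonneg (abs_nonneg _) p
  have hEsplit : |h 1| ^ p + |h 2 - h 1| ^ p + |h 3 - h 2| ^ p + TailE = lam := by
    have esplit : ∑ k ∈ Finset.Ico 0 3, |h (k + 1) - h k| ^ p
        + ∑ k ∈ Finset.Ico 3 n, |h (k + 1) - h k| ^ p
        = ∑ k ∈ Finset.Ico 0 n, |h (k + 1) - h k| ^ p :=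
      Finset.sum_Ico_consecutive _ (by omega) (by omega)
    have e3 : ∑ k ∈ Finset.Ico 0 3, |h (k + 1) - h k| ^ p
        = |h 1| ^ p + |h 2 - h 1| ^ p + |h 3 - h 2| ^ p := by
      rw [show Finset.Ico 0 3 = Finset.range 3 by rw [Finset.range_eq_Ico]]
      rw [Finset.sum_range_succ, Finset.sum_range_succ, Finset.sum_range_one]
      rw [show (0 : ℕ) + 1 = 1 from rfl, show (1 : ℕ) + 1 = 2 from rfl,
        show (2 : ℕ) + 1 = 3 from rfl, hh0, sub_zero]
    have hEex : ∑ k ∈ Finset.Ico 0 n, |h (k + 1) - h k| ^ p = lam := by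
      rw [← Finset.range_eq_Ico]
      exact hE
    rw [e3, hEex] at esplit
    linarith [esplit]
  have hEnum : (∑ e ∈ (tadpole n 3).edgeFinset, edgeTerm p (fun v : Fin n => g' v.val) e)
      ≤ 2 * |t - h 3| ^ p + TailE := by
    have hmono := Finset.sum_le_sum_of_subset_of_nonneg
      (f := edgeTerm p (fun v : Fin n => g' v.val)) (tad_edge_subset n hn)
      (fun e _ _ => edgeTerm_nonneg p (fun v : Fin n => g' v.val) e)
    rw [Finset.sum_insert (tad_e02_not_mem n hn),
      Finset.sum_image (tad_chain_inj n)] at hmono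
    have e02 : edgeTerm p (fun v : Fin n => g' v.val)
        s((⟨0, by omega⟩ : Fin n), (⟨2, by omega⟩ : Fin n)) = |t - h 3| ^ p := by
      show |g' (0 : ℕ) - g' 2| ^ p = _
      rw [hg'0, hg'big 2 le_rfl]
    have echain : (∑ k : Fin (n - 1), edgeTerm p (fun v : Fin n => g' v.val)
        s((⟨k.val, by have := k.isLt; omega⟩ : Fin n),
          (⟨k.val + 1, by have := k.isLt; omega⟩ : Fin n)))
        = ∑ k ∈ Finset.range (n - 1), |g' k - g' (k + 1)| ^ p :=
      Fin.sum_univ_eq_sum_range (fun k => |g' k - g' (k + 1)| ^ p) (n - 1)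
    rw [e02, echain] at hmono
    have hchain : ∑ k ∈ Finset.range (n - 1), |g' k - g' (k + 1)| ^ p
        = |t - h 3| ^ p + TailE := by
      have esplit : ∑ k ∈ Finset.Ico 0 2, |g' k - g' (k + 1)| ^ p
          + ∑ k ∈ Finset.Ico 2 (n - 1), |g' k - g' (k + 1)| ^ p
          = ∑ k ∈ Finset.Ico 0 (n - 1), |g' k - g' (k + 1)| ^ p :=
        Finset.sum_Ico_consecutive _ (by omega) (by omega)
      have e1 : ∑ k ∈ Finset.Ico 0 2, |g' k - g' (k + 1)| ^ p = |t - h 3| ^ p := by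
        rw [show Finset.Ico 0 2 = Finset.range 2 by rw [Finset.range_eq_Ico]]
        rw [Finset.sum_range_succ, Finset.sum_range_one]
        rw [show (0 : ℕ) + 1 = 1 from rfl, show (1 : ℕ) + 1 = 2 from rfl]
        rw [hg'0, hg'1, hg'big 2 le_rfl, sub_self, abs_zero, Real.zero_rpow hp0.ne']
        ring
      have e2 : ∑ k ∈ Finset.Ico 2 (n - 1), |g' k - g' (k + 1)| ^ p = TailE := by
        have hcong : ∀ k ∈ Finset.Ico 2 (n - 1), |g' k - g' (k + 1)| ^ p
            = |h (k + 1) - h (k + 2)| ^ p := by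
          intro k hk
          rw [Finset.mem_Ico] at hk
          rw [hg'big k hk.1, hg'big (k + 1) (by omega)]
        rw [Finset.sum_congr rfl hcong, Finset.sum_Ico_eq_sum_range, hTailE,
          Finset.sum_Ico_eq_sum_range]
        apply Finset.sum_congr
        · first
          | (congr 1; omega)
          | congr 1
        · intro i _
          have ea : 2 + i + 1 = 3 + i := by omega
          have eb : 2 + i + 2 = 3 + i + 1 := by omega
          rw [ea, eb, abs_sub_comm]
      rw [Finset.range_eq_Ico, ← esplit, e1, e2]
    rw [hchain] at hmono
    calc (∑ e ∈ (tadpole n 3).edgeFinset, edgeTerm p (fun v : Fin n => g' v.val) e)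
        ≤ |t - h 3| ^ p + (|t - h 3| ^ p + TailE) := hmono
      _ = 2 * |t - h 3| ^ p + TailE := by ring
  have hDpos : 0 < 2 * t ^ p + S3 := by
    have := Real.rpow_pos_of_pos ht0 p
    linarith
  have hh1p : 0 < |h 1| ^ p := Real.rpow_pos_of_pos (abs_pos.mpr h1.ne') p
  have hstrict : (∑ e ∈ (tadpole n 3).edgeFinset, edgeTerm p (fun v : Fin n => g' v.val) e)
      < lam * (2 * t ^ p + S3) := by
    rcases le_total (h 3) (h 2) with h32 | h23
    · -- t = h 2
      have htv : t = h 2 := max_eq_left h32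
      have key1 : |t - h 3| ^ p ≤ |h 2 - h 1| ^ p := by
        rw [htv, abs_of_nonneg (by linarith), abs_of_nonneg (by linarith)]
        exact Real.rpow_le_rpow (by linarith) (by linarith) hp0.le
      have key2 : (1 : ℝ) ≤ 2 * t ^ p + S3 := by
        have et : t ^ p = |h 2| ^ p := by
          rw [htv, abs_of_nonneg (hnn 2)]
        have e12 : |h 1| ^ p ≤ |h 2| ^ p := by
          rw [abs_of_nonneg (hnn 1), abs_of_nonneg (hnn 2)]
          exact Real.rpow_le_rpow (hnn 1) h12 hp0.le
        rw [et]
        linarith [hDD1]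
      have e33 : |h 3 - h 2| ^ p = |t - h 3| ^ p := by
        rw [htv, abs_sub_comm]
      have hEb : 2 * |t - h 3| ^ p + TailE < lam := by
        rw [← hEsplit, e33]
        linarith [key1, hh1p]
      have hlam_le : lam ≤ lam * (2 * t ^ p + S3) :=
        le_mul_of_one_le_right hlam0.le key2
      linarith [hEnum, hEb, hlam_le]
    · -- t = h 3
      have htv : t = h 3 := max_eq_right h23
      have e0 : |t - h 3| ^ p = 0 := by
        rw [htv, sub_self, abs_zero, Real.zero_rpow hp0.ne']
      have key2 : (1 : ℝ) ≤ 2 * t ^ p + S3 := by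
        have et : t ^ p = |h 3| ^ p := by
          rw [htv, abs_of_nonneg (hnn 3)]
        have e13 : |h 1| ^ p ≤ |h 3| ^ p := by
          rw [abs_of_nonneg (hnn 1), abs_of_nonneg (hnn 3)]
          exact Real.rpow_le_rpow (hnn 1) h13 hp0.le
        have e23 : |h 2| ^ p ≤ |h 3| ^ p := by
          rw [abs_of_nonneg (hnn 2), abs_of_nonneg (hnn 3)]
          exact Real.rpow_le_rpow (hnn 2) h23 hp0.le
        rw [et]
        linarith [hDD1]
      have hEb : 2 * |t - h 3| ^ p + TailE < lam := by
        rw [e0, ← hEsplit]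
        have n1 : 0 ≤ |h 2 - h 1| ^ p := Real.rpow_nonneg (abs_nonneg _) p
        have n2 : 0 ≤ |h 3 - h 2| ^ p := Real.rpow_nonneg (abs_nonneg _) p
        linarith [hh1p]
      have hlam_le : lam ≤ lam * (2 * t ^ p + S3) :=
        le_mul_of_one_le_right hlam0.le key2
      linarith [hEnum, hEb, hlam_le]
  have hfinal : rayleigh (tadpole n 3) p (fun v : Fin n => g' v.val) < lam := by
    have hray : rayleigh (tadpole n 3) p (fun v : Fin n => g' v.val)
        = (∑ e ∈ (tadpole n 3).edgeFinset, edgeTerm p (fun v : Fin n => g' v.val) e)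
          / (∑ v : Fin n, |(fun v : Fin n => g' v.val) v| ^ p) := rfl
    rw [hray, hDnum, div_lt_iff₀ hDpos]
    exact hstrict
  linarith [hle, hfinal]

end PCGT

/-- A path graph with `n ≥ 4` edges has strictly larger first `p`-Dirichlet eigenvalue
than the tadpole graph `T_{n,3}`. -/
theorem path_case_gt_tadpole {V : Type*} [Fintype V] [DecidableEq V] (G : SimpleGraph V)
    (n : ℕ) (hn : 4 ≤ n) (hcard : G.edgeFinset.card = n) (hconn : G.Connected)
    (hbd : ∃ v, G.degree v = 1) (hpath : Nonempty (G ≃g pathG (n + 1)))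
    {p : ℝ} (hp : 1 < p) :
    lambda1 G p > lambda1 (tadpole n 3) p := by
  obtain ⟨e⟩ := hpath
  have htrans : lambda1 G p = lambda1 (pathG (n + 1)) p := PCGT.lambda1_iso e p
  obtain ⟨a, ha0, ham, hnn, hD, hE, hmin⟩ := PCGT.exists_min n hn p hp
  have hlam0 : 0 < lambda1 (pathG (n + 1)) p := PCGT.lam_pos n p hp _ a ha0 hD hE
  have hlam1 : lambda1 (pathG (n + 1)) p < 1 := PCGT.lam_lt_one n hn p hp _ hmin
  obtain ⟨h, hh0, hhn, hnn2, hD2, hE2, h1, h12, h13⟩ :=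
    PCGT.improve n hn p hp _ hlam0 hlam1 a ha0 ham hnn hD hE hmin
  have hlt := PCGT.tad_below n hn p hp _ hlam0 h hh0 hhn hnn2 hD2 hE2 h1 h12 h13
  rw [gt_iff_lt, htrans]
  exact hlt
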